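/- Let f ∈ K[z] be a polynomial of degree d ≥ 1, let D = {z ∈ K : |z − a| ≤ s} be a closed disk with s > 0, and let m be a positive integer with p ∤ m. Suppose f maps D exactly m-to-1 onto its image f(D) = {f(z) : z ∈ D}, i.e. for every w ∈ f(D) the polynomial f(z) − w has exactly m roots in D counted with multiplicity. Then the derivative f′ has exactly m − 1 roots in D, counted with multiplicity. -/

import Mathlib

open Polynomial Multiset

section Helpers
variable {K : Type*} [NormedField K]

lemma na_msum_le (hna : IsNonarchimedean (fun x : K => ‖x‖)) (B : ℝ) (hB : 0 ≤ B)
    (t : Multiset K) (h : ∀ x ∈ t, ‖x‖ ≤ B) : ‖t.sum‖ ≤ B := by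
  induction t using Multiset.induction with
  | empty => simpa using hB
  | cons a t ih =>
    rw [Multiset.sum_cons]
    exact le_trans (hna _ _)
      (max_le (h a (mem_cons_self a t)) (ih fun x hx => h x (mem_cons_of_mem hx)))

lemma na_msum_lt (hna : IsNonarchimedean (fun x : K => ‖x‖)) (B : ℝ) (hB : 0 < B)
    (t : Multiset K) (h : ∀ x ∈ t, ‖x‖ < B) : ‖t.sum‖ < B := by
  induction t using Multiset.induction with
  | empty => simpa using hB
  | cons a t ih =>
    rw [Multiset.sum_cons]
    exact lt_of_le_of_lt (hna _ _)
      (max_lt (h a (mem_cons_self a t)) (ih fun x hx => h x (mem_cons_of_mem hx)))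

lemma na_fsum_le (hna : IsNonarchimedean (fun x : K => ‖x‖)) (B : ℝ) (hB : 0 ≤ B)
    {ι : Type*} (u : Finset ι) (f : ι → K) (h : ∀ i ∈ u, ‖f i‖ ≤ B) :
    ‖∑ i ∈ u, f i‖ ≤ B := by
  refine na_msum_le hna B hB _ ?_
  intro x hx
  obtain ⟨i, hi, rfl⟩ := Multiset.mem_map.mp hx
  exact h i hi

lemma na_fsum_lt (hna : IsNonarchimedean (fun x : K => ‖x‖)) (B : ℝ) (hB : 0 < B)
    {ι : Type*} (u : Finset ι) (f : ι → K) (h : ∀ i ∈ u, ‖f i‖ < B) :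
    ‖∑ i ∈ u, f i‖ < B := by
  refine na_msum_lt hna B hB _ ?_
  intro x hx
  obtain ⟨i, hi, rfl⟩ := Multiset.mem_map.mp hx
  exact h i hi

lemma na_add_eq (hna : IsNonarchimedean (fun x : K => ‖x‖)) {x y : K} (h : ‖y‖ < ‖x‖) :
    ‖x + y‖ = ‖x‖ := by
  refine le_antisymm (le_trans (hna x y) (max_le le_rfl h.le)) ?_
  have h2 : ‖x‖ ≤ max ‖x + y‖ ‖y‖ := by
    simpa using hna (x + y) (-y)
  rcases le_max_iff.mp h2 with h3 | h3
  · exact h3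
  · exact absurd h3 (not_le.mpr h)

lemma norm_mprod (t : Multiset K) : ‖t.prod‖ = (t.map fun x => ‖x‖).prod := by
  induction t using Multiset.induction with
  | empty => simp
  | cons a t ih => simp [norm_mul, ih]

lemma mprod_le (s : ℝ) (hs : 0 ≤ s) (t : Multiset ℝ) (h0 : ∀ x ∈ t, 0 ≤ x)
    (h : ∀ x ∈ t, x ≤ s) : t.prod ≤ s ^ Multiset.card t := by
  induction t using Multiset.induction with
  | empty => simp
  | cons a t ih =>
    rw [Multiset.prod_cons, Multiset.card_cons, pow_succ, mul_comm (s ^ Multiset.card t) s]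
    exact mul_le_mul (h a (mem_cons_self a t))
      (ih (fun x hx => h0 x (mem_cons_of_mem hx)) (fun x hx => h x (mem_cons_of_mem hx)))
      (Multiset.prod_nonneg fun x hx => h0 x (mem_cons_of_mem hx))
      hs

lemma mprod_pos (t : Multiset ℝ) (h0 : ∀ x ∈ t, 0 < x) : 0 < t.prod := by
  induction t using Multiset.induction with
  | empty => simp
  | cons a t ih =>
    rw [Multiset.prod_cons]
    exact mul_pos (h0 a (mem_cons_self a t)) (ih fun x hx => h0 x (mem_cons_of_mem hx))

lemma mprod_ge (s : ℝ) (hs : 0 ≤ s) (t : Multiset ℝ) (h : ∀ x ∈ t, s ≤ x) :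
    s ^ Multiset.card t ≤ t.prod := by
  induction t using Multiset.induction with
  | empty => simp
  | cons a t ih =>
    rw [Multiset.prod_cons, Multiset.card_cons, pow_succ, mul_comm (s ^ Multiset.card t) s]
    exact mul_le_mul (h a (mem_cons_self a t)) (ih fun x hx => h x (mem_cons_of_mem hx))
      (pow_nonneg hs _) (le_trans hs (h a (mem_cons_self a t)))

lemma mprod_gt (s : ℝ) (hs : 0 < s) (t : Multiset ℝ) (h : ∀ x ∈ t, s < x)
    (ht : t ≠ 0) : s ^ Multiset.card t < t.prod := by
  induction t using Multiset.induction with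
  | empty => exact absurd rfl ht
  | cons a t ih =>
    rw [Multiset.prod_cons, Multiset.card_cons, pow_succ, mul_comm (s ^ Multiset.card t) s]
    have h1 : s ^ Multiset.card t ≤ t.prod :=
      mprod_ge s hs.le t fun x hx => (h x (mem_cons_of_mem hx)).le
    have h2 : 0 < t.prod := mprod_pos t fun x hx => lt_trans hs (h x (mem_cons_of_mem hx))
    calc s * s ^ Multiset.card t ≤ s * t.prod := by
          exact mul_le_mul_of_nonneg_left h1 hs.le
      _ < a * t.prod := mul_lt_mul_of_pos_right (h a (mem_cons_self a t)) h2


lemma esymm_norm_le (hna : IsNonarchimedean (fun x : K => ‖x‖)) (s : ℝ) (hs : 0 ≤ s)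
    (t : Multiset K) (h : ∀ x ∈ t, ‖x‖ ≤ s) (j : ℕ) : ‖t.esymm j‖ ≤ s ^ j := by
  refine na_msum_le hna _ (pow_nonneg hs j) _ ?_
  intro x hx
  obtain ⟨u, hu, rfl⟩ := Multiset.mem_map.mp hx
  obtain ⟨hut, huc⟩ := Multiset.mem_powersetCard.mp hu
  rw [norm_mprod]
  have := mprod_le s hs (u.map fun x => ‖x‖)
    (by rintro y hy; obtain ⟨z, hz, rfl⟩ := Multiset.mem_map.mp hy; exact norm_nonneg z)
    (by rintro y hy; obtain ⟨z, hz, rfl⟩ := Multiset.mem_map.mp hy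
        exact h z (Multiset.mem_of_le hut hz))
  rwa [Multiset.card_map, huc] at this

lemma esymm_prod_le (hna : IsNonarchimedean (fun x : K => ‖x‖)) (s : ℝ) (hs : 0 < s)
    (t : Multiset K) (h : ∀ x ∈ t, s < ‖x‖) (j : ℕ) (hj : j ≤ Multiset.card t) :
    ‖t.esymm j‖ * s ^ (Multiset.card t - j) ≤ (t.map fun x => ‖x‖).prod := by
  classical
  set P : ℝ := (t.map fun x => ‖x‖).prod with hP
  have hPpos : 0 < P := mprod_pos _ (by
    rintro y hy; obtain ⟨z, hz, rfl⟩ := Multiset.mem_map.mp hy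
    exact lt_trans hs (h z hz))
  rw [← le_div_iff₀ (pow_pos hs _)]
  refine na_msum_le hna _ (le_of_lt (div_pos hPpos (pow_pos hs _))) _ ?_
  intro x hx
  obtain ⟨u, hu, rfl⟩ := Multiset.mem_map.mp hx
  obtain ⟨hut, huc⟩ := Multiset.mem_powersetCard.mp hu
  rw [norm_mprod, le_div_iff₀ (pow_pos hs _)]
  have hsplit : (u.map fun x => ‖x‖).prod * ((t - u).map fun x => ‖x‖).prod = P := by
    rw [hP, ← Multiset.prod_add, ← Multiset.map_add]
    congr 1
    rw [add_comm, tsub_add_cancel_of_le hut]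
  have hcard : Multiset.card (t - u) = Multiset.card t - j := by
    rw [Multiset.card_sub hut, huc]
  have h2 : s ^ (Multiset.card t - j) ≤ ((t - u).map fun x => ‖x‖).prod := by
    have := mprod_ge s hs.le ((t - u).map fun x => ‖x‖) (by
      rintro y hy; obtain ⟨z, hz, rfl⟩ := Multiset.mem_map.mp hy
      exact (h z (Multiset.mem_of_le (tsub_le_self) hz)).le)
    rwa [Multiset.card_map, hcard] at this
  calc (u.map fun x => ‖x‖).prod * s ^ (Multiset.card t - j)
      ≤ (u.map fun x => ‖x‖).prod * ((t - u).map fun x => ‖x‖).prod := by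
        refine mul_le_mul_of_nonneg_left h2 ?_
        exact Multiset.prod_nonneg (by
          rintro y hy; obtain ⟨z, hz, rfl⟩ := Multiset.mem_map.mp hy; exact norm_nonneg z)
    _ = P := hsplit

lemma esymm_prod_lt (hna : IsNonarchimedean (fun x : K => ‖x‖)) (s : ℝ) (hs : 0 < s)
    (t : Multiset K) (h : ∀ x ∈ t, s < ‖x‖) (j : ℕ) (hj : j < Multiset.card t) :
    ‖t.esymm j‖ * s ^ (Multiset.card t - j) < (t.map fun x => ‖x‖).prod := by
  classical
  set P : ℝ := (t.map fun x => ‖x‖).prod with hP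
  have hPpos : 0 < P := mprod_pos _ (by
    rintro y hy; obtain ⟨z, hz, rfl⟩ := Multiset.mem_map.mp hy
    exact lt_trans hs (h z hz))
  rw [← lt_div_iff₀ (pow_pos hs _)]
  refine na_msum_lt hna _ (div_pos hPpos (pow_pos hs _)) _ ?_
  intro x hx
  obtain ⟨u, hu, rfl⟩ := Multiset.mem_map.mp hx
  obtain ⟨hut, huc⟩ := Multiset.mem_powersetCard.mp hu
  rw [norm_mprod, lt_div_iff₀ (pow_pos hs _)]
  have hsplit : (u.map fun x => ‖x‖).prod * ((t - u).map fun x => ‖x‖).prod = P := by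
    rw [hP, ← Multiset.prod_add, ← Multiset.map_add]
    congr 1
    rw [add_comm, tsub_add_cancel_of_le hut]
  have hcard : Multiset.card (t - u) = Multiset.card t - j := by
    rw [Multiset.card_sub hut, huc]
  have hupos : 0 < (u.map fun x => ‖x‖).prod := mprod_pos _ (by
    rintro y hy; obtain ⟨z, hz, rfl⟩ := Multiset.mem_map.mp hy
    exact lt_trans hs (h z (Multiset.mem_of_le hut hz)))
  have h2 : s ^ (Multiset.card t - j) < ((t - u).map fun x => ‖x‖).prod := by
    have := mprod_gt s hs ((t - u).map fun x => ‖x‖) (by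
      rintro y hy; obtain ⟨z, hz, rfl⟩ := Multiset.mem_map.mp hy
      exact h z (Multiset.mem_of_le (tsub_le_self) hz)) (by
        intro h0
        have : Multiset.card ((t - u).map fun x => ‖x‖) = 0 := by rw [h0]; simp
        rw [Multiset.card_map, hcard] at this
        omega)
    rwa [Multiset.card_map, hcard] at this
  calc (u.map fun x => ‖x‖).prod * s ^ (Multiset.card t - j)
      < (u.map fun x => ‖x‖).prod * ((t - u).map fun x => ‖x‖).prod :=
        mul_lt_mul_of_pos_left h2 hupos
    _ = P := hsplit


lemma newton {K : Type*} [NormedField K] [IsAlgClosed K]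
    (hna : IsNonarchimedean (fun x : K => ‖x‖))
    (g : K[X]) (hg : g ≠ 0) (a : K) (s : ℝ) (hs : 0 < s) (n : ℕ)
    (hn : Multiset.card (g.roots.filter (fun z => ‖z - a‖ ≤ s)) = n) :
    (g.comp (X + C a)).coeff n ≠ 0 ∧
    (∀ i, ‖(g.comp (X + C a)).coeff i‖ * s ^ i ≤ ‖(g.comp (X + C a)).coeff n‖ * s ^ n) ∧
    (∀ i, n < i → ‖(g.comp (X + C a)).coeff i‖ * s ^ i < ‖(g.comp (X + C a)).coeff n‖ * s ^ n) := by
  classical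
  set A' : Multiset K := (g.roots.filter (fun z => ‖z - a‖ ≤ s)).map (fun r => r - a) with hA'
  set B' : Multiset K := (g.roots.filter (fun z => ¬ ‖z - a‖ ≤ s)).map (fun r => r - a) with hB'
  have hA'mem : ∀ x ∈ A', ‖x‖ ≤ s := by
    rintro x hx
    obtain ⟨r, hr, rfl⟩ := Multiset.mem_map.mp hx
    exact (Multiset.mem_filter.mp hr).2
  have hB'mem : ∀ x ∈ B', s < ‖x‖ := by
    rintro x hx
    obtain ⟨r, hr, rfl⟩ := Multiset.mem_map.mp hx
    exact lt_of_not_ge (Multiset.mem_filter.mp hr).2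
  have hcardA : Multiset.card A' = n := by rw [hA', Multiset.card_map, hn]
  set k : ℕ := Multiset.card B' with hk
  set QA : K[X] := (A'.map fun r => X - C r).prod with hQA
  set QB : K[X] := (B'.map fun r => X - C r).prod with hQB
  set c : K := g.leadingCoeff with hc
  have hcne : c ≠ 0 := leadingCoeff_ne_zero.mpr hg
  -- factorization
  have hfac : g.comp (X + C a) = C c * (QA * QB) := by
    have h1 : g = C c * (g.roots.map fun r => X - C r).prod :=
      (C_leadingCoeff_mul_prod_multiset_X_sub_C (IsAlgClosed.splits g).natDegree_eq_card_roots.symm).symm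
    have h2 : g.roots = (g.roots.filter (fun z => ‖z - a‖ ≤ s))
        + (g.roots.filter (fun z => ¬ ‖z - a‖ ≤ s)) :=
      (Multiset.filter_add_not _ _).symm
    have hcomp : ∀ t : Multiset K,
        ((t.map fun r => X - C r).prod).comp (X + C a)
          = ((t.map fun r => r - a).map fun r => X - C r).prod := by
      intro t
      induction t using Multiset.induction with
      | empty => simp
      | cons b t ih =>
        simp only [Multiset.map_cons, Multiset.prod_cons, mul_comp, ih, sub_comp, X_comp, C_comp]
        congr 1
        rw [map_sub]
        ring
    conv_lhs => rw [h1]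
    rw [mul_comp, C_comp]
    congr 1
    rw [h2, hcomp, Multiset.map_add, Multiset.map_add, Multiset.prod_add]
  set P : ℝ := (B'.map fun x => ‖x‖).prod with hPdef
  have hPpos : 0 < P := mprod_pos _ (by
    rintro y hy
    obtain ⟨z, hz, rfl⟩ := Multiset.mem_map.mp hy
    exact lt_trans hs (hB'mem z hz))
  -- QA facts
  have hQAmonic : QA.Monic :=
    monic_multiset_prod_of_monic _ _ fun r _ => monic_X_sub_C r
  have hQAdeg : QA.natDegree = n := by
    rw [hQA, natDegree_multiset_prod_X_sub_C_eq_card, hcardA]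
  have hQAn : QA.coeff n = 1 := by
    rw [← hQAdeg]; exact hQAmonic.coeff_natDegree
  have hQAle : ∀ x, x ≤ n → ‖QA.coeff x‖ ≤ s ^ (n - x) := by
    intro x hx
    rw [hQA, Multiset.prod_X_sub_C_coeff A' (by rw [hcardA]; exact hx), hcardA,
      norm_mul, norm_pow, norm_neg, norm_one, one_pow, one_mul]
    exact esymm_norm_le hna s hs.le A' hA'mem _
  have hQAzero : ∀ x, n < x → QA.coeff x = 0 := fun x hx =>
    coeff_eq_zero_of_natDegree_lt (by rw [hQAdeg]; exact hx)
  -- QB facts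
  have hQBdeg : QB.natDegree = k := by
    rw [hQB, natDegree_multiset_prod_X_sub_C_eq_card, hk]
  have hQB0 : ‖QB.coeff 0‖ = P := by
    rw [coeff_zero_eq_eval_zero, hQB, eval_multiset_prod, Multiset.map_map, norm_mprod,
      Multiset.map_map, hPdef]
    refine congrArg Multiset.prod (Multiset.map_congr rfl ?_)
    intro r _
    simp
  have hQBle : ∀ y, ‖QB.coeff y‖ * s ^ y ≤ P := by
    intro y
    by_cases hy : y ≤ k
    · have h1 := esymm_prod_le hna s hs B' hB'mem (k - y) (by omega)
      rw [← hk, show k - (k - y) = y by omega] at h1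
      rw [hQB, Multiset.prod_X_sub_C_coeff B' (show y ≤ Multiset.card B' by rw [← hk]; exact hy),
        ← hk, norm_mul, norm_pow, norm_neg, norm_one, one_pow, one_mul]
      exact h1
    · rw [coeff_eq_zero_of_natDegree_lt (by rw [hQBdeg]; omega), norm_zero, zero_mul]
      exact hPpos.le
  have hQBlt : ∀ y, 1 ≤ y → ‖QB.coeff y‖ * s ^ y < P := by
    intro y hy1
    by_cases hy : y ≤ k
    · have h1 := esymm_prod_lt hna s hs B' hB'mem (k - y) (by omega)
      rw [← hk, show k - (k - y) = y by omega] at h1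
      rw [hQB, Multiset.prod_X_sub_C_coeff B' (show y ≤ Multiset.card B' by rw [← hk]; exact hy),
        ← hk, norm_mul, norm_pow, norm_neg, norm_one, one_pow, one_mul]
      exact h1
    · rw [coeff_eq_zero_of_natDegree_lt (by rw [hQBdeg]; omega), norm_zero, zero_mul]
      exact hPpos
  -- product claims
  have claim3 : ‖(QA * QB).coeff n‖ = P := by
    rw [coeff_mul]
    have hmem : ((n, 0) : ℕ × ℕ) ∈ Finset.HasAntidiagonal.antidiagonal n := by simp
    rw [← Finset.add_sum_erase _ _ hmem]
    have hrest : ‖∑ x ∈ (Finset.HasAntidiagonal.antidiagonal n).erase (n, 0),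
        QA.coeff x.1 * QB.coeff x.2‖ < ‖QA.coeff (n, 0).1 * QB.coeff (n, 0).2‖ := by
      rw [hQAn, one_mul, hQB0]
      refine na_fsum_lt hna _ hPpos _ _ ?_
      rintro ⟨x, y⟩ hxy
      have hxy1 : x + y = n := Finset.HasAntidiagonal.mem_antidiagonal.mp (Finset.mem_of_mem_erase hxy)
      have hne : ((x, y) : ℕ × ℕ) ≠ (n, 0) := Finset.ne_of_mem_erase hxy
      have hy1 : 1 ≤ y := by
        rcases Nat.eq_zero_or_pos y with h0 | h0
        · exact absurd (by rw [h0] at hxy1 ⊢; rw [add_zero] at hxy1; rw [hxy1]) hne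
        · exact h0
      have hxn : x ≤ n := by omega
      calc ‖QA.coeff x * QB.coeff y‖ = ‖QA.coeff x‖ * ‖QB.coeff y‖ := norm_mul _ _
        _ ≤ s ^ (n - x) * ‖QB.coeff y‖ :=
            mul_le_mul_of_nonneg_right (hQAle x hxn) (norm_nonneg _)
        _ = ‖QB.coeff y‖ * s ^ y := by rw [show n - x = y by omega]; ring
        _ < P := hQBlt y hy1
    rw [na_add_eq hna hrest, hQAn, one_mul, hQB0]
  have claim1 : ∀ i, ‖(QA * QB).coeff i‖ * s ^ i ≤ P * s ^ n := by
    intro i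
    rw [← le_div_iff₀ (pow_pos hs i), coeff_mul]
    refine na_fsum_le hna _ (by positivity) _ _ ?_
    rintro ⟨x, y⟩ hxy
    have hxy1 : x + y = i := Finset.HasAntidiagonal.mem_antidiagonal.mp hxy
    by_cases hxn : x ≤ n
    · rw [le_div_iff₀ (pow_pos hs i)]
      calc ‖QA.coeff x * QB.coeff y‖ * s ^ i
          = (‖QA.coeff x‖ * s ^ x) * (‖QB.coeff y‖ * s ^ y) := by
            rw [norm_mul, ← hxy1, pow_add]; ring
        _ ≤ (s ^ (n - x) * s ^ x) * P := by
            refine mul_le_mul ?_ (hQBle y) (by positivity) (by positivity)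
            exact mul_le_mul_of_nonneg_right (hQAle x hxn) (by positivity)
        _ = P * s ^ n := by rw [← pow_add, show n - x + x = n by omega]; ring
    · rw [hQAzero x (by omega), zero_mul, norm_zero]
      positivity
  have claim2 : ∀ i, n < i → ‖(QA * QB).coeff i‖ * s ^ i < P * s ^ n := by
    intro i hi
    rw [← lt_div_iff₀ (pow_pos hs i), coeff_mul]
    refine na_fsum_lt hna _ (by positivity) _ _ ?_
    rintro ⟨x, y⟩ hxy
    have hxy1 : x + y = i := Finset.HasAntidiagonal.mem_antidiagonal.mp hxy
    by_cases hxn : x ≤ n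
    · rw [lt_div_iff₀ (pow_pos hs i)]
      have hy1 : 1 ≤ y := by omega
      calc ‖QA.coeff x * QB.coeff y‖ * s ^ i
          = (‖QA.coeff x‖ * s ^ x) * (‖QB.coeff y‖ * s ^ y) := by
            rw [norm_mul, ← hxy1, pow_add]; ring
        _ ≤ (s ^ n) * (‖QB.coeff y‖ * s ^ y) := by
            refine mul_le_mul_of_nonneg_right ?_ (by positivity)
            calc ‖QA.coeff x‖ * s ^ x ≤ s ^ (n - x) * s ^ x :=
                  mul_le_mul_of_nonneg_right (hQAle x hxn) (by positivity)
              _ = s ^ n := by rw [← pow_add, show n - x + x = n by omega]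
        _ < s ^ n * P := mul_lt_mul_of_pos_left (hQBlt y hy1) (by positivity)
        _ = P * s ^ n := mul_comm _ _
    · rw [hQAzero x (by omega), zero_mul, norm_zero]
      positivity
  -- assemble
  have hco : ∀ i, (g.comp (X + C a)).coeff i = c * (QA * QB).coeff i := by
    intro i; rw [hfac, coeff_C_mul]
  have hcpos : 0 < ‖c‖ := norm_pos_iff.mpr hcne
  have hRHS : ‖(QA * QB).coeff n‖ * s ^ n = P * s ^ n := by rw [claim3]
  refine ⟨?_, ?_, ?_⟩
  · rw [hco]
    refine mul_ne_zero hcne ?_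
    intro h0
    rw [h0, norm_zero] at claim3
    exact hPpos.ne claim3
  · intro i
    rw [hco i, hco n, norm_mul, norm_mul, mul_assoc, mul_assoc]
    exact mul_le_mul_of_nonneg_left ((claim1 i).trans_eq hRHS.symm) (norm_nonneg c)
  · intro i hi
    rw [hco i, hco n, norm_mul, norm_mul, mul_assoc, mul_assoc]
    exact mul_lt_mul_of_pos_left ((claim2 i hi).trans_eq hRHS.symm) hcpos

end Helpers

/-- Let `f ∈ K[z]` have degree `d ≥ 1`, let `D = {z : |z - a| ≤ s}`
with `s > 0`, and let `m` be a positive integer with `p ∤ m`. If `f` maps `D`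
exactly `m`-to-1 onto its image (for every `w ∈ f(D)`, `f(z) - w` has exactly `m`
roots in `D` counted with multiplicity), then `f'` has exactly `m - 1` roots in
`D`, counted with multiplicity. -/
theorem stmt_7 (K : Type*) [NormedField K] [IsAlgClosed K] [CompleteSpace K]
    (hna : IsNonarchimedean (fun x : K => ‖x‖))
    (p : ℕ) (hp : p.Prime)
    (hext : ∀ q : ℚ, ‖(q : K)‖ = (padicNorm p q : ℝ))
    (f : K[X]) (d : ℕ) (hd : 1 ≤ d) (hdeg : f.natDegree = d)
    (a : K) (s : ℝ) (hs : 0 < s)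
    (m : ℕ) (hm : 0 < m) (hpm : ¬ (p : ℕ) ∣ m)
    (hmto1 : ∀ w : K, (∃ z : K, ‖z - a‖ ≤ s ∧ f.eval z = w) →
      Multiset.card ((f - C w).roots.filter (fun z => ‖z - a‖ ≤ s)) = m) :
    Multiset.card (f.derivative.roots.filter (fun z => ‖z - a‖ ≤ s)) = m - 1 := by
  classical
  haveI : Fact p.Prime := ⟨hp⟩
  -- norm of naturals
  have hnormnat : ∀ j : ℕ, ‖((j : ℚ) : K)‖ = (padicNorm p (j : ℚ) : ℝ) := fun j => hext _
  have hnorm1 : ∀ j : ℕ, ‖((j : ℕ) : K)‖ ≤ 1 := by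
    intro j
    have h1 : ((j : ℕ) : K) = ((j : ℚ) : K) := by push_cast; ring
    rw [h1, hnormnat j]
    have h2 : padicNorm p ((j : ℤ) : ℚ) ≤ 1 := padicNorm.of_int (j : ℤ)
    have h3 : ((j : ℤ) : ℚ) = (j : ℚ) := by push_cast; ring
    rw [h3] at h2
    exact_mod_cast h2
  have hnormm : ‖((m : ℕ) : K)‖ = 1 := by
    have h1 : ((m : ℕ) : K) = ((m : ℚ) : K) := by push_cast; ring
    rw [h1, hnormnat m]
    have h2 : padicNorm p (m : ℚ) = 1 := (padicNorm.nat_eq_one_iff m).mpr hpm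
    rw [h2]
    exact Rat.cast_one
  -- characteristic zero
  haveI : CharZero K := by
    have hnz : ∀ n : ℕ, n ≠ 0 → ((n : ℕ) : K) ≠ 0 := by
      intro n hn h0
      have h1 : ((n : ℕ) : K) = ((n : ℚ) : K) := by push_cast; ring
      have h2 : ‖((n : ℚ) : K)‖ = 0 := by rw [← h1, h0, norm_zero]
      rw [hext] at h2
      have h3 : padicNorm p (n : ℚ) = 0 := by exact_mod_cast h2
      have h4 : (n : ℚ) = 0 := padicNorm.zero_of_padicNorm_eq_zero h3
      exact hn (by exact_mod_cast h4)
    haveI : CharP K 0 := ⟨fun n => by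
      rw [zero_dvd_iff]
      constructor
      · intro h0
        by_contra hn
        exact hnz n hn h0
      · rintro rfl
        simp⟩
    exact CharP.charP_to_charZero K
  have hd0 : f.derivative ≠ 0 := by
    intro h0
    have := natDegree_eq_zero_of_derivative_eq_zero h0
    omega
  -- first fiber: w = f.eval a
  have hg1ne : f - C (f.eval a) ≠ 0 := by
    have h1 : (f - C (f.eval a)).natDegree = d := by rw [natDegree_sub_C, hdeg]
    intro h0
    rw [h0, natDegree_zero] at h1
    omega
  have hm1 : Multiset.card (((f - C (f.eval a)).roots).filter (fun z => ‖z - a‖ ≤ s)) = m :=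
    hmto1 (f.eval a) ⟨a, by simpa using hs.le, rfl⟩
  obtain ⟨h1ne, h1le, h1lt⟩ := newton hna (f - C (f.eval a)) hg1ne a s hs m hm1
  have hcoe : ∀ i, 1 ≤ i →
      ((f - C (f.eval a)).comp (X + C a)).coeff i = (f.comp (X + C a)).coeff i := by
    intro i hi
    rw [sub_comp, C_comp, coeff_sub, coeff_C, if_neg (by omega), sub_zero]
  set G : K[X] := f.comp (X + C a) with hG
  have hble : ∀ i, 1 ≤ i → ‖G.coeff i‖ * s ^ i ≤ ‖G.coeff m‖ * s ^ m := by
    intro i hi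
    rw [← hcoe i hi, ← hcoe m hm]
    exact h1le i
  have hblt : ∀ i, m < i → ‖G.coeff i‖ * s ^ i < ‖G.coeff m‖ * s ^ m := by
    intro i hi
    rw [← hcoe i (by omega), ← hcoe m hm]
    exact h1lt i hi
  -- derivative coefficients
  have hdercomp : f.derivative.comp (X + C a) = derivative G := by
    rw [hG, derivative_comp]
    simp
  have hci : ∀ i, (f.derivative.comp (X + C a)).coeff i
      = G.coeff (i + 1) * (((i + 1 : ℕ) : K)) := by
    intro i
    rw [hdercomp, coeff_derivative]
    push_cast
    ring
  have hcnorm : ∀ i, ‖(f.derivative.comp (X + C a)).coeff i‖ ≤ ‖G.coeff (i + 1)‖ := by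
    intro i
    rw [hci i, norm_mul]
    calc ‖G.coeff (i + 1)‖ * ‖(((i + 1 : ℕ) : K))‖ ≤ ‖G.coeff (i + 1)‖ * 1 :=
          mul_le_mul_of_nonneg_left (hnorm1 (i + 1)) (norm_nonneg _)
      _ = ‖G.coeff (i + 1)‖ := mul_one _
  have hcm : ‖(f.derivative.comp (X + C a)).coeff (m - 1)‖ = ‖G.coeff m‖ := by
    rw [hci (m - 1), norm_mul, show m - 1 + 1 = m by omega, hnormm, mul_one]
  -- shifted inequalities
  have hshift : ∀ i j : ℕ, ‖G.coeff (i + 1)‖ * s ^ (i + 1) ≤ ‖G.coeff (j + 1)‖ * s ^ (j + 1) →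
      ‖G.coeff (i + 1)‖ * s ^ i ≤ ‖G.coeff (j + 1)‖ * s ^ j := by
    intro i j h
    rw [pow_succ, pow_succ, ← mul_assoc, ← mul_assoc] at h
    exact le_of_mul_le_mul_right h hs
  have hshift' : ∀ i j : ℕ, ‖G.coeff (i + 1)‖ * s ^ (i + 1) < ‖G.coeff (j + 1)‖ * s ^ (j + 1) →
      ‖G.coeff (i + 1)‖ * s ^ i < ‖G.coeff (j + 1)‖ * s ^ j := by
    intro i j h
    rw [pow_succ, pow_succ, ← mul_assoc, ← mul_assoc] at h
    exact lt_of_mul_lt_mul_right h hs.le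
  have hm1m : m - 1 + 1 = m := by omega
  have hcle : ∀ i, ‖(f.derivative.comp (X + C a)).coeff i‖ * s ^ i
      ≤ ‖(f.derivative.comp (X + C a)).coeff (m - 1)‖ * s ^ (m - 1) := by
    intro i
    rw [hcm]
    calc ‖(f.derivative.comp (X + C a)).coeff i‖ * s ^ i
        ≤ ‖G.coeff (i + 1)‖ * s ^ i :=
          mul_le_mul_of_nonneg_right (hcnorm i) (by positivity)
      _ ≤ ‖G.coeff (m - 1 + 1)‖ * s ^ (m - 1) := by
          refine hshift i (m - 1) ?_
          rw [hm1m]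
          exact hble (i + 1) (by omega)
      _ = ‖G.coeff m‖ * s ^ (m - 1) := by rw [hm1m]
  have hclt : ∀ i, m - 1 < i → ‖(f.derivative.comp (X + C a)).coeff i‖ * s ^ i
      < ‖(f.derivative.comp (X + C a)).coeff (m - 1)‖ * s ^ (m - 1) := by
    intro i hi
    rw [hcm]
    calc ‖(f.derivative.comp (X + C a)).coeff i‖ * s ^ i
        ≤ ‖G.coeff (i + 1)‖ * s ^ i :=
          mul_le_mul_of_nonneg_right (hcnorm i) (by positivity)
      _ < ‖G.coeff (m - 1 + 1)‖ * s ^ (m - 1) := by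
          refine hshift' i (m - 1) ?_
          rw [hm1m]
          exact hblt (i + 1) (by omega)
      _ = ‖G.coeff m‖ * s ^ (m - 1) := by rw [hm1m]
  -- apply newton to the derivative
  obtain ⟨h2ne, h2le, h2lt⟩ := newton hna f.derivative hd0 a s hs
    (Multiset.card (f.derivative.roots.filter (fun z => ‖z - a‖ ≤ s))) rfl
  set n' := Multiset.card (f.derivative.roots.filter (fun z => ‖z - a‖ ≤ s)) with hn'
  rcases lt_trichotomy n' (m - 1) with hlt | heq | hgt
  · exfalso
    have a1 := h2lt (m - 1) hlt
    have a2 := hcle n'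
    linarith
  · exact heq
  · exfalso
    have a1 := hclt n' hgt
    have a2 := h2le (m - 1)
    linarith
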